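/- arXiv:2103.17039 — 2 statements merged into one kernel-verified Lean document; each statement's English description precedes it below -/
import Mathlib

section
/- For every real n > 1, the sum ∑_{r=3}^{⌊log₂ n⌋} n^{-(r-2)/(2r)} tends to 0 as n → ∞. -/
open Filter Finset Real

/-- The sum `∑_{r=3}^{⌊log₂ n⌋} n^{-(r-2)/(2r)}` tends to `0` as `n → ∞`. -/
theorem stmt_0 :
    Tendsto (fun n : ℝ =>
      ∑ r ∈ Finset.Icc 3 ⌊Real.logb 2 n⌋₊,
        n ^ (-(((r : ℝ) - 2) / (2 * (r : ℝ))))) atTop (nhds 0) := by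
  have hlog : Tendsto (fun x : ℝ => Real.log x / x ^ (1/6 : ℝ)) atTop (nhds 0) :=
    (isLittleO_log_rpow_atTop (by norm_num : (0:ℝ) < 1/6)).tendsto_div_nhds_zero
  have hmain : Tendsto (fun x : ℝ => Real.logb 2 x * x ^ (-(1/6) : ℝ)) atTop (nhds 0) := by
    have h := hlog.div_const (Real.log 2)
    rw [zero_div] at h
    refine h.congr' ?_
    filter_upwards [eventually_ge_atTop (1:ℝ)] with x hx
    have hx0 : (0:ℝ) < x := by linarith
    have hpos : (0:ℝ) < x ^ (1/6 : ℝ) := Real.rpow_pos_of_pos hx0 _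
    rw [Real.rpow_neg hx0.le, Real.logb]
    ring
  refine squeeze_zero' ?_ ?_ hmain
  · filter_upwards [eventually_ge_atTop (1:ℝ)] with x hx
    exact Finset.sum_nonneg fun r _ => Real.rpow_nonneg (by linarith) _
  · filter_upwards [eventually_ge_atTop (1:ℝ)] with x hx
    have hx0 : (0:ℝ) ≤ x := by linarith
    have hlb0 : (0:ℝ) ≤ Real.logb 2 x := Real.logb_nonneg (by norm_num) hx
    have hstep : ∀ r ∈ Finset.Icc 3 ⌊Real.logb 2 x⌋₊,
        x ^ (-(((r : ℝ) - 2) / (2 * (r : ℝ)))) ≤ x ^ (-(1/6) : ℝ) := by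
      intro r hr
      have hr3 : (3:ℝ) ≤ (r:ℝ) := by
        exact_mod_cast (Finset.mem_Icc.mp hr).1
      apply Real.rpow_le_rpow_of_exponent_le hx
      have : (1:ℝ)/6 ≤ ((r:ℝ) - 2) / (2 * r) := by
        rw [div_le_div_iff₀ (by norm_num) (by linarith)]
        linarith
      linarith
    calc ∑ r ∈ Finset.Icc 3 ⌊Real.logb 2 x⌋₊, x ^ (-(((r : ℝ) - 2) / (2 * (r : ℝ))))
        ≤ (Finset.Icc 3 ⌊Real.logb 2 x⌋₊).card • (x ^ (-(1/6) : ℝ)) :=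
          Finset.sum_le_card_nsmul _ _ _ hstep
      _ = ((Finset.Icc 3 ⌊Real.logb 2 x⌋₊).card : ℝ) * x ^ (-(1/6) : ℝ) := by
          simp [nsmul_eq_mul]
      _ ≤ Real.logb 2 x * x ^ (-(1/6) : ℝ) := by
          apply mul_le_mul_of_nonneg_right _ (Real.rpow_nonneg hx0 _)
          have h1 : ((Finset.Icc 3 ⌊Real.logb 2 x⌋₊).card : ℝ) ≤ (⌊Real.logb 2 x⌋₊ : ℝ) := by
            rw [Nat.card_Icc]
            have h2 : ⌊Real.logb 2 x⌋₊ + 1 - 3 ≤ ⌊Real.logb 2 x⌋₊ := by omega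
            exact_mod_cast h2
          exact h1.trans (Nat.floor_le hlb0)
end

section
/- For every z ≥ 1, √(2π)·z^{z+1/2}·e^{−z}·e^{1/(12z+1)} ≤ Γ(z+1) ≤ √(2π)·z^{z+1/2}·e^{−z}·e^{1/(12z)}. -/
open Real

open Filter Topology


lemma log_ratio_upper {t : ℝ} (h0 : 0 < t) (h1 : t < 1) :
    log (1 + t) - log (1 - t) ≤ 2 * t + (2/3) * t^3 / (1 - t^2) := by
  have habs : |t| < 1 := abs_lt.2 ⟨by linarith, h1⟩
  have ha := hasSum_log_sub_log_of_abs_lt_one habs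
  have ht2 : t^2 < 1 := by nlinarith
  have hgeo : HasSum (fun k : ℕ => (2/3 : ℝ) * t ^ (2*k+1)) ((2/3) * t * (1 - t^2)⁻¹) := by
    have := (hasSum_geometric_of_lt_one (sq_nonneg t) ht2).mul_left ((2/3) * t)
    have e : (fun k : ℕ => (2/3 : ℝ) * t ^ (2*k+1)) = fun i => 2 / 3 * t * (t ^ 2) ^ i := by
      funext k
      rw [← pow_mul]
      ring
    rw [e]; exact this
  have hite : HasSum (fun k : ℕ => if k = 0 then (4/3 : ℝ) * t else 0) ((4/3) * t) :=
    hasSum_ite_eq 0 _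
  have hb := hgeo.add hite
  have hsum_eq : (2/3) * t * (1 - t^2)⁻¹ + (4/3) * t = 2 * t + (2/3) * t^3 / (1 - t^2) := by
    have h12 : (1 : ℝ) - t^2 ≠ 0 := by nlinarith
    field_simp
    ring
  rw [hsum_eq] at hb
  refine hasSum_le (fun k => ?_) ha hb
  rcases Nat.eq_zero_or_pos k with rfl | hk
  · simp; linarith
  · rw [if_neg (Nat.pos_iff_ne_zero.1 hk)]
    have h3 : (3:ℝ) ≤ 2 * k + 1 := by
      have : (1:ℝ) ≤ k := by exact_mod_cast hk
      linarith
    have hpow : (0:ℝ) ≤ t ^ (2*k+1) := pow_nonneg h0.le _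
    have hle : (2:ℝ) * (1 / (2*k+1)) ≤ 2/3 := by
      rw [mul_one_div, div_le_div_iff₀ (by linarith) (by norm_num)]
      linarith
    nlinarith [mul_le_mul_of_nonneg_right hle hpow]

lemma log_ratio_lower {t : ℝ} (h0 : 0 < t) (h1 : t < 1) :
    6 * t / (3 - t^2) ≤ log (1 + t) - log (1 - t) := by
  have habs : |t| < 1 := abs_lt.2 ⟨by linarith, h1⟩
  have ha := hasSum_log_sub_log_of_abs_lt_one habs
  have ht2 : t^2 < 1 := by nlinarith
  have hgeo : HasSum (fun k : ℕ => (2:ℝ) * t * (t^2/3) ^ k) (2 * t * (1 - t^2/3)⁻¹) :=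
    (hasSum_geometric_of_lt_one (by positivity) (by nlinarith)).mul_left _
  have hsum_eq : 2 * t * (1 - t^2/3)⁻¹ = 6 * t / (3 - t^2) := by
    have : (3:ℝ) - t^2 ≠ 0 := by nlinarith
    have : (1:ℝ) - t^2/3 ≠ 0 := by intro h; apply this; linarith [h]
    field_simp
    ring
  rw [hsum_eq] at hgeo
  refine hasSum_le (fun k => ?_) hgeo ha
  have h3k : (2 * k + 1 : ℝ) ≤ 3 ^ k := by
    have := one_add_mul_le_pow (by norm_num : (-2:ℝ) ≤ 2) k
    calc (2 * k + 1 : ℝ) = 1 + k * 2 := by ring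
    _ ≤ (1+2)^k := this
    _ = 3 ^ k := by norm_num
  have hpow3 : (0:ℝ) < 3 ^ k := by positivity
  have hk1 : (0:ℝ) < 2 * k + 1 := by positivity
  have h1' : (1:ℝ) / 3^k ≤ 1 / (2*k+1) := by
    apply div_le_div_of_nonneg_left one_pos.le hk1 h3k
  calc (2:ℝ) * t * (t^2/3)^k = (2 * (1/3^k)) * t^(2*k+1) := by
        rw [div_pow, ← pow_mul]; ring
    _ ≤ 2 * (1/(2*k+1)) * t^(2*k+1) := by
        have : (0:ℝ) ≤ t^(2*k+1) := pow_nonneg h0.le _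
        nlinarith

noncomputable def Sfun (x : ℝ) : ℝ := Real.log (2 * π) / 2 + (x + 1/2) * Real.log x - x
noncomputable def Efun (x : ℝ) : ℝ := Real.log (Real.Gamma (x + 1)) - Sfun x
noncomputable def Gfun (x : ℝ) : ℝ := (x + 1/2) * (Real.log (x + 1) - Real.log x) - 1

lemma log_succ_sub_log {x : ℝ} (hx : 0 < x) :
    Real.log (x + 1) - Real.log x = log (1 + 1/(2*x+1)) - log (1 - 1/(2*x+1)) := by
  have h1 : (1 : ℝ) + 1/(2*x+1) = (2*x+2)/(2*x+1) := by field_simp; ring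
  have h2 : (1 : ℝ) - 1/(2*x+1) = (2*x)/(2*x+1) := by field_simp; ring
  rw [h1, h2, log_div (by linarith) (by linarith), log_div (by linarith) (by linarith)]
  have h3 : (2*x+2 : ℝ) = 2 * (x+1) := by ring
  have h4 : (2*x : ℝ) = 2 * x := rfl
  rw [h3, log_mul two_ne_zero (by linarith), log_mul two_ne_zero hx.ne']
  ring

lemma Gfun_upper {x : ℝ} (hx : 0 < x) : Gfun x ≤ 1/(12*x) - 1/(12*(x+1)) := by
  set t : ℝ := 1/(2*x+1) with ht
  have htpos : 0 < t := by positivity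
  have ht1 : t < 1 := by
    rw [ht, div_lt_one (by linarith)]; linarith
  have hub := log_ratio_upper htpos ht1
  have hGle : Gfun x ≤ (x + 1/2) * (2*t + (2/3)*t^3/(1-t^2)) - 1 := by
    rw [Gfun, log_succ_sub_log hx]
    have hx2 : (0:ℝ) < x + 1/2 := by linarith
    nlinarith [mul_le_mul_of_nonneg_left hub hx2.le]
  refine hGle.trans (le_of_eq ?_)
  have h2x : (2*x+1 : ℝ) ≠ 0 := by positivity
  have h1t : (1:ℝ) - t^2 = (4*x^2+4*x)/(2*x+1)^2 := by
    rw [ht]; field_simp; ring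
  rw [h1t, ht]
  have hx1 : (x:ℝ) + 1 ≠ 0 := by positivity
  field_simp
  ring

lemma Gfun_lower {x : ℝ} (hx : 1 ≤ x) : 1/(12*x+1) - 1/(12*(x+1)+1) ≤ Gfun x := by
  have hx0 : 0 < x := by linarith
  set t : ℝ := 1/(2*x+1) with ht
  have htpos : 0 < t := by positivity
  have ht1 : t < 1 := by
    rw [ht, div_lt_one (by linarith)]; linarith
  have hlb := log_ratio_lower htpos ht1
  have hGge : (x + 1/2) * (6*t/(3-t^2)) - 1 ≤ Gfun x := by
    rw [Gfun, log_succ_sub_log hx0]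
    have hx2 : (0:ℝ) < x + 1/2 := by linarith
    nlinarith [mul_le_mul_of_nonneg_left hlb hx2.le]
  refine le_trans ?_ hGge
  have h3t : (3:ℝ) - t^2 = (12*x^2+12*x+2)/(2*x+1)^2 := by
    rw [ht]; field_simp; ring
  rw [h3t, ht]
  have h1 : (12*x+1 : ℝ) > 0 := by linarith
  have h2 : (12*(x+1)+1 : ℝ) > 0 := by linarith
  have h3 : (12*x^2+12*x+2 : ℝ) > 0 := by nlinarith
  have h4 : (2*x+1:ℝ) > 0 := by linarith
  rw [div_sub_div _ _ h1.ne' h2.ne', div_le_iff₀ (by positivity)]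
  have key : (x + 1/2) * (6 * (1/(2*x+1)) / ((12*x^2+12*x+2)/(2*x+1)^2)) - 1
      = 1 / (12*x^2+12*x+2) := by
    field_simp
    ring
  rw [key, div_mul_eq_mul_div, le_div_iff₀ h3]
  nlinarith

lemma Efun_sub_succ {x : ℝ} (hx : 0 < x) : Efun x - Efun (x+1) = Gfun x := by
  have hx1 : (0:ℝ) < x + 1 := by linarith
  have hg : Real.Gamma (x + 1 + 1) = (x+1) * Real.Gamma (x+1) :=
    Real.Gamma_add_one (by linarith)
  have hgpos : 0 < Real.Gamma (x+1) := Real.Gamma_pos_of_pos hx1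
  rw [Efun, Efun, Gfun, Sfun, Sfun, hg, log_mul hx1.ne' hgpos.ne']
  ring

lemma Efun_nat_eq {n : ℕ} (hn : 1 ≤ n) :
    Efun n = Real.log (Stirling.stirlingSeq n) - Real.log (Real.sqrt π) := by
  have hn0 : (0:ℝ) < n := by exact_mod_cast hn
  have hfac : Real.Gamma ((n:ℝ) + 1) = ((Nat.factorial n : ℕ) : ℝ) := by
    exact_mod_cast Real.Gamma_nat_eq_factorial n
  have hform := Stirling.log_stirlingSeq_formula n
  rw [Efun, Sfun, hfac, hform, log_sqrt pi_pos.le,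
    log_div (by positivity) (exp_ne_zero 1), log_mul two_ne_zero hn0.ne',
    log_mul two_ne_zero pi_pos.ne', log_exp]
  ring

lemma Efun_nat_tendsto : Tendsto (fun n : ℕ => Efun n) atTop (𝓝 0) := by
  have hsqrt : (0:ℝ) < Real.sqrt π := Real.sqrt_pos.2 pi_pos
  have h1 : Tendsto (fun n : ℕ => Real.log (Stirling.stirlingSeq n)) atTop
      (𝓝 (Real.log (Real.sqrt π))) :=
    ((Real.continuousAt_log hsqrt.ne').tendsto).comp Stirling.tendsto_stirlingSeq_sqrt_pi
  have h2 := h1.sub (tendsto_const_nhds (x := Real.log (Real.sqrt π)))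
  rw [sub_self] at h2
  apply h2.congr'
  filter_upwards [eventually_ge_atTop 1] with n hn
  exact (Efun_nat_eq hn).symm

lemma A_bounds {M t : ℝ} (hM : 1 ≤ M) (ht0 : 0 < t) (ht1 : t < 1) :
    t * Real.log M ≤ Real.log (Real.Gamma (M + t + 1)) - Real.log (Real.Gamma (M + 1)) ∧
    Real.log (Real.Gamma (M + t + 1)) - Real.log (Real.Gamma (M + 1)) ≤ t * Real.log (M + 1) := by
  have hM0 : (0:ℝ) < M := by linarith
  have hconv := Real.convexOn_log_Gamma
  have hstep : ∀ y : ℝ, 0 < y → (Real.log ∘ Real.Gamma) (y + 1) = Real.log y + (Real.log ∘ Real.Gamma) y := by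
    intro y hy
    simp only [Function.comp_apply, Real.Gamma_add_one hy.ne',
      Real.log_mul hy.ne' (Real.Gamma_pos_of_pos hy).ne']
  have hG1 : Real.log (Real.Gamma (M + 1)) = Real.log M + Real.log (Real.Gamma M) := by
    simpa using hstep M hM0
  constructor
  · have h := hconv.slope_mono_adjacent (x := M) (y := M + 1) (z := M + t + 1)
      (Set.mem_Ioi.2 hM0) (Set.mem_Ioi.2 (by linarith)) (by linarith) (by linarith)
    have e1 : M + 1 - M = 1 := by ring
    have e2 : M + t + 1 - (M + 1) = t := by ring
    rw [e1, e2, div_one] at h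
    simp only [Function.comp_apply] at h
    rw [le_div_iff₀ ht0] at h
    nlinarith [h, hG1]
  · have h := hconv.slope_mono_adjacent (x := M + 1) (y := M + t + 1) (z := M + 2)
      (Set.mem_Ioi.2 (by linarith)) (Set.mem_Ioi.2 (by linarith)) (by linarith) (by linarith)
    have e2 : M + t + 1 - (M + 1) = t := by ring
    have e3 : M + 2 - (M + t + 1) = 1 - t := by ring
    have e4 : (M : ℝ) + 2 = (M + 1) + 1 := by ring
    rw [e2, e3, e4, hstep (M+1) (by linarith)] at h
    simp only [Function.comp_apply] at h
    rw [div_le_div_iff₀ ht0 (by linarith)] at h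
    nlinarith [h, hG1]

lemma log_one_add_div_tendsto (c : ℝ) :
    Tendsto (fun y : ℝ => Real.log (1 + c / y)) atTop (𝓝 0) := by
  have h1 : Tendsto (fun y : ℝ => 1 + c / y) atTop (𝓝 1) := by
    simpa using tendsto_const_nhds.add ((tendsto_const_nhds (x := c)).div_atTop tendsto_id)
  have := ((Real.continuousAt_log one_ne_zero).tendsto).comp h1
  simpa [Function.comp_def] using this

lemma mul_log_tendsto (t c : ℝ) :
    Tendsto (fun y : ℝ => (y + c) * Real.log (1 + t / y)) atTop (𝓝 t) := by
  have h1 := Real.tendsto_mul_log_one_add_div_atTop t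
  have h2 := (log_one_add_div_tendsto t).const_mul c
  have h := h1.add h2
  rw [mul_zero, add_zero] at h
  apply h.congr
  intro y; ring

lemma Efun_add_tendsto {z : ℝ} (hz : 1 ≤ z) :
    Tendsto (fun n : ℕ => Efun (z + n)) atTop (𝓝 0) := by
  set m : ℕ := ⌊z⌋₊ with hm
  have hm1 : 1 ≤ m := Nat.le_floor (by exact_mod_cast hz)
  have hmz : (m:ℝ) ≤ z := Nat.floor_le (by linarith)
  have hzm : z < m + 1 := Nat.lt_floor_add_one z
  set t : ℝ := z - m with htdef
  have ht0 : 0 ≤ t := by simp [htdef]; linarith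
  have ht1 : t < 1 := by simp [htdef]; linarith
  have hmn : Tendsto (fun n : ℕ => ((m:ℝ) + n)) atTop atTop :=
    tendsto_atTop_add_const_left atTop (m:ℝ) tendsto_natCast_atTop_atTop
  have hEM : Tendsto (fun n : ℕ => Efun ((m:ℝ) + n)) atTop (𝓝 0) := by
    have h := Efun_nat_tendsto.comp (tendsto_add_atTop_nat m)
    apply h.congr
    intro n
    simp only [Function.comp_apply]
    push_cast
    ring_nf
  rcases eq_or_lt_of_le ht0 with ht | ht
  · -- t = 0 : z = m
    have hz' : z = (m:ℝ) := by linarith [htdef ▸ ht.symm]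
    apply hEM.congr
    intro n; rw [hz']
  · -- 0 < t
    set Mn : ℕ → ℝ := fun n => (m:ℝ) + n with hMdef
    have hMge : ∀ n, 1 ≤ Mn n := by
      intro n
      have : (1:ℝ) ≤ (m:ℝ) := by exact_mod_cast hm1
      have : (0:ℝ) ≤ (n:ℝ) := Nat.cast_nonneg n
      simp only [hMdef]; linarith
    have hzn : ∀ n : ℕ, z + n = Mn n + t := by
      intro n; simp only [hMdef, htdef]; ring
    -- B identity: Efun (M+t) = Efun M + A - B
    have hkey : ∀ n : ℕ,
        Efun (Mn n + t) = Efun (Mn n)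
          + (Real.log (Real.Gamma (Mn n + t + 1)) - Real.log (Real.Gamma (Mn n + 1)))
          - ((Mn n + t + 1/2) * Real.log (Mn n + t) - (Mn n + 1/2) * Real.log (Mn n) - t) := by
      intro n
      simp only [Efun, Sfun]
      ring
    have hlogdiff : ∀ n : ℕ, Real.log (Mn n + t) - Real.log (Mn n)
        = Real.log (1 + t / Mn n) := by
      intro n
      have hMpos : (0:ℝ) < Mn n := lt_of_lt_of_le one_pos (hMge n)
      rw [← Real.log_div (by linarith) hMpos.ne']
      congr 1
      field_simp
    have hlogdiff1 : ∀ n : ℕ, Real.log (Mn n + 1) - Real.log (Mn n)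
        = Real.log (1 + 1 / Mn n) := by
      intro n
      have hMpos : (0:ℝ) < Mn n := lt_of_lt_of_le one_pos (hMge n)
      rw [← Real.log_div (by linarith) hMpos.ne']
      congr 1
      field_simp
    -- lower and upper sequences
    set lo : ℕ → ℝ := fun n => Efun (Mn n) + (t - (Mn n + t + 1/2) * Real.log (1 + t / Mn n))
      with hlodef
    set up : ℕ → ℝ := fun n => lo n + t * Real.log (1 + 1 / Mn n) with hupdef
    clear_value up lo Mn t m
    have hlo_le : ∀ n : ℕ, lo n ≤ Efun (z + n) := by
      intro n
      rw [hzn n, hkey n, hlodef]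
      have hA := (A_bounds (hMge n) ht ht1).1
      have hB : (Mn n + t + 1/2) * Real.log (Mn n + t) - (Mn n + 1/2) * Real.log (Mn n) - t
          = t * Real.log (Mn n) + ((Mn n + t + 1/2) * Real.log (1 + t / Mn n) - t) := by
        rw [← hlogdiff n]; ring
      rw [hB]
      simp only []
      linarith
    have hup_le : ∀ n : ℕ, Efun (z + n) ≤ up n := by
      intro n
      rw [hzn n, hkey n, hupdef, hlodef]
      have hA := (A_bounds (hMge n) ht ht1).2
      have hB : (Mn n + t + 1/2) * Real.log (Mn n + t) - (Mn n + 1/2) * Real.log (Mn n) - t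
          = t * Real.log (Mn n + 1)
            + ((Mn n + t + 1/2) * Real.log (1 + t / Mn n) - t) - t * Real.log (1 + 1 / Mn n) := by
        rw [← hlogdiff n, ← hlogdiff1 n]; ring
      rw [hB]
      simp only []
      linarith
    have hlo_tendsto : Tendsto lo atTop (𝓝 0) := by
      have h1 : Tendsto (fun n : ℕ => (Mn n + t + 1/2) * Real.log (1 + t / Mn n)) atTop (𝓝 t) := by
        have := (mul_log_tendsto t (t + 1/2)).comp hmn
        apply this.congr
        intro n
        simp only [Function.comp_apply, hMdef]
        ring_nf
      have h2 : Tendsto (fun n : ℕ => t - (Mn n + t + 1/2) * Real.log (1 + t / Mn n)) atTop (𝓝 0) := by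
        have h' := (tendsto_const_nhds (x := t)).sub h1
        rw [sub_self] at h'
        exact h'
      have h'' := hEM.add h2
      rw [add_zero] at h''
      rw [hlodef]
      simp only [hMdef] at h'' ⊢
      exact h''
    have hup_tendsto : Tendsto up atTop (𝓝 0) := by
      have h3 : Tendsto (fun n : ℕ => t * Real.log (1 + 1 / Mn n)) atTop (𝓝 0) := by
        have h' := ((log_one_add_div_tendsto 1).comp hmn).const_mul t
        rw [mul_zero] at h'
        exact h'
      have h'' := hlo_tendsto.add h3
      rw [add_zero] at h''
      rw [hupdef]
      exact h''
    exact tendsto_of_tendsto_of_tendsto_of_le_of_le hlo_tendsto hup_tendsto hlo_le hup_le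

lemma Efun_bounds {z : ℝ} (hz : 1 ≤ z) : 1/(12*z+1) ≤ Efun z ∧ Efun z ≤ 1/(12*z) := by
  have hE := Efun_add_tendsto hz
  have hdenom : ∀ b : ℝ, Tendsto (fun n : ℕ => (1:ℝ) / (12 * (z + n) + b)) atTop (𝓝 0) := by
    intro b
    have h1 : Tendsto (fun n : ℕ => 12 * (z + (n:ℝ)) + b) atTop atTop := by
      have h0 : Tendsto (fun n : ℕ => ((n:ℝ))) atTop atTop := tendsto_natCast_atTop_atTop
      have h2 := (tendsto_atTop_add_const_left atTop z h0).const_mul_atTop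
        (by norm_num : (0:ℝ) < 12)
      exact tendsto_atTop_add_const_right atTop b h2
    exact tendsto_const_nhds.div_atTop h1
  have hpos : ∀ n : ℕ, 1 ≤ z + n := by
    intro n
    have : (0:ℝ) ≤ n := Nat.cast_nonneg n
    linarith
  have key : ∀ F : ℕ → ℝ, (∀ n, F (n+1) ≤ F n) → Tendsto F atTop (𝓝 0) → 0 ≤ F 0 := by
    intro F hstep hF
    have hmono : ∀ n, F n ≤ F 0 := by
      intro n
      induction n with
      | zero => exact le_refl _
      | succ k ih => exact (hstep k).trans ih
    exact le_of_tendsto hF (Filter.Eventually.of_forall hmono)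
  constructor
  · -- lower bound
    have h0 : 0 ≤ Efun (z + (0:ℕ)) - 1 / (12 * (z + (0:ℕ)) + 1) := by
      apply key (fun n : ℕ => Efun (z + n) - 1 / (12 * (z + n) + 1))
      · intro n
        have hx1 : 1 ≤ z + n := hpos n
        have hsub := Efun_sub_succ (x := z + n) (by linarith)
        have hG := Gfun_lower hx1
        push_cast
        have hc : z + ((n:ℝ) + 1) = (z + n) + 1 := by ring
        rw [hc]
        linarith
      · have h' := hE.sub (hdenom 1)
        rw [sub_zero] at h'
        exact h'
    simp only [Nat.cast_zero, add_zero] at h0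
    linarith
  · -- upper bound
    have hd0 : Tendsto (fun n : ℕ => (1:ℝ) / (12 * (z + n))) atTop (𝓝 0) := by
      apply (hdenom 0).congr
      intro n
      rw [add_zero]
    have h0 : 0 ≤ 1 / (12 * (z + (0:ℕ))) - Efun (z + (0:ℕ)) := by
      apply key (fun n : ℕ => 1 / (12 * (z + n)) - Efun (z + n))
      · intro n
        have hx1 : 1 ≤ z + n := hpos n
        have hsub := Efun_sub_succ (x := z + n) (by linarith)
        have hG := Gfun_upper (x := z + n) (by linarith)
        push_cast
        have hc : z + ((n:ℝ) + 1) = (z + n) + 1 := by ring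
        rw [hc]
        linarith
      · have h' := hd0.sub hE
        rw [sub_zero] at h'
        exact h'
    simp only [Nat.cast_zero, add_zero] at h0
    linarith

/-- Robbins's form of Stirling's bounds, for real `z ≥ 1`:
`√(2π) z^{z+1/2} e^{−z} e^{1/(12z+1)} ≤ Γ(z+1) ≤ √(2π) z^{z+1/2} e^{−z} e^{1/(12z)}`. -/
theorem stmt_15 (z : ℝ) (hz : 1 ≤ z) :
    Real.sqrt (2 * Real.pi) * z ^ (z + 1/2) * Real.exp (-z) * Real.exp (1 / (12 * z + 1))
        ≤ Real.Gamma (z + 1) ∧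
    Real.Gamma (z + 1) ≤
      Real.sqrt (2 * Real.pi) * z ^ (z + 1/2) * Real.exp (-z) * Real.exp (1 / (12 * z)) := by
  obtain ⟨h1, h2⟩ := Efun_bounds hz
  have hz0 : (0:ℝ) < z := by linarith
  have hΓ : 0 < Real.Gamma (z + 1) := Real.Gamma_pos_of_pos (by linarith)
  have hΓeq : Real.Gamma (z + 1) = Real.exp (Sfun z + Efun z) := by
    rw [Efun, add_sub_cancel, Real.exp_log hΓ]
  have hrw : ∀ c : ℝ,
      Real.sqrt (2 * Real.pi) * z ^ (z + 1/2) * Real.exp (-z) * Real.exp c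
        = Real.exp (Sfun z + c) := by
    intro c
    have h2π : (0:ℝ) < 2 * π := by positivity
    rw [Real.rpow_def_of_pos hz0, ← Real.exp_log (Real.sqrt_pos.2 h2π),
      Real.log_sqrt h2π.le, ← Real.exp_add, ← Real.exp_add, ← Real.exp_add]
    congr 1
    rw [Sfun]
    ring
  rw [hΓeq, hrw, hrw]
  exact ⟨Real.exp_le_exp.2 (by linarith), Real.exp_le_exp.2 (by linarith)⟩
end
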